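/- Let U = U_n·U_{n−1}·⋯·U_1 (n ≥ 1) be a normal-form word in the letters {S_1,...,S_4, S_1ᵀ,...,S_4ᵀ} (no two adjacent letters equal, and a letter S_jᵀ is never immediately followed on its right by a letter S_i with i ≠ j). Let r_i(U) denote the i-th row sum of the matrix U, i.e. the i-th entry of U·𝟙. Then: (i) r_i(U) + r_j(U) > 0 for all i ≠ j; (ii) if the leftmost letter U_n equals S_h, then r_h(U) > 0 and 2·r_i(U) < r_1(U)+r_2(U)+r_3(U)+r_4(U) for every i ≠ h; (iii) if the leftmost letter U_n equals S_hᵀ, then r_h(U) < 0 and 2·r_i(U) < r_1(U)+r_2(U)+r_3(U)+r_4(U) for every i ≠ h. -/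

import Mathlib

open Matrix

/-- The Apollonian generators `S₁, S₂, S₃, S₄`. -/
noncomputable def S : Fin 4 → Matrix (Fin 4) (Fin 4) ℝ := fun i =>
  Matrix.of fun j k =>
    if j = i then (if k = i then -1 else 2) else (if j = k then 1 else 0)

/-- A letter of the super-Apollonian group: `(j, false)` denotes `S j` and
`(j, true)` denotes the dual generator `S jᵀ`. -/
noncomputable def gen : Fin 4 × Bool → Matrix (Fin 4) (Fin 4) ℝ :=
  fun a => if a.2 then (S a.1)ᵀ else S a.1

/-- The normal form condition on an adjacent pair of letters `a, b`, where `a`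
is immediately to the left of `b` in the word:
(i) `a ≠ b`, and (ii) if `a = S jᵀ` then `b` is not `S i` for any `i ≠ j`. -/
def NormalRel : Fin 4 × Bool → Fin 4 × Bool → Prop := fun a b =>
  a ≠ b ∧ (a.2 = true → b.2 = false → b.1 = a.1)

/-- The `i`-th row sum of a `4 × 4` matrix. -/
noncomputable def rowSum (U : Matrix (Fin 4) (Fin 4) ℝ) (i : Fin 4) : ℝ :=
  ∑ j, U i j

/- ======================= auxiliary material ======================= -/

lemma NF_finmk0 : (⟨0, by norm_num⟩ : Fin 4) = 0 := rfl
lemma NF_finmk1 : (⟨1, by norm_num⟩ : Fin 4) = 1 := rfl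
lemma NF_finmk2 : (⟨2, by norm_num⟩ : Fin 4) = 2 := rfl
lemma NF_finmk3 : (⟨3, by norm_num⟩ : Fin 4) = 3 := rfl

lemma NF_rowSum_mul (M U : Matrix (Fin 4) (Fin 4) ℝ) (i : Fin 4) :
    rowSum (M * U) i = ∑ k, M i k * rowSum U k := by
  simp only [rowSum, Matrix.mul_apply, Finset.mul_sum]
  exact Finset.sum_comm

lemma NF_rowSum_S_mul (h : Fin 4) (U : Matrix (Fin 4) (Fin 4) ℝ) (i : Fin 4) :
    rowSum (S h * U) i =
      if i = h then 2 * (∑ k, rowSum U k) - 3 * rowSum U h else rowSum U i := by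
  rw [NF_rowSum_mul]
  by_cases hi : i = h
  · subst hi
    simp only [S, of_apply, eq_self_iff_true, if_true]
    have key : ∀ k : Fin 4, (if k = i then (-1:ℝ) else 2) * rowSum U k
        = 2 * rowSum U k - (if k = i then 3 * rowSum U k else 0) := by
      intro k; split <;> ring
    rw [Finset.sum_congr rfl fun k _ => key k, Finset.sum_sub_distrib, ← Finset.mul_sum,
      Finset.sum_ite_eq' Finset.univ i (fun k => 3 * rowSum U k)]
    simp
  · simp only [S, of_apply, if_neg hi, ite_mul, one_mul, zero_mul]
    simp [Finset.sum_ite_eq]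

lemma NF_rowSum_ST_mul (h : Fin 4) (U : Matrix (Fin 4) (Fin 4) ℝ) (i : Fin 4) :
    rowSum ((S h)ᵀ * U) i =
      if i = h then -(rowSum U h) else rowSum U i + 2 * rowSum U h := by
  rw [NF_rowSum_mul]
  simp only [transpose_apply, S, of_apply]
  by_cases hi : i = h
  · subst hi
    simp only [eq_self_iff_true, if_true]
    have key : ∀ k : Fin 4, (if k = i then (-1:ℝ) else if k = i then 1 else 0) * rowSum U k
        = if k = i then -rowSum U k else 0 := by
      intro k; by_cases hk : k = i <;> simp [hk]
    rw [Finset.sum_congr rfl fun k _ => key k,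
      Finset.sum_ite_eq' Finset.univ i (fun k => -rowSum U k)]
    simp
  · simp only [if_neg hi]
    have key : ∀ k : Fin 4, (if k = h then (2:ℝ) else if k = i then 1 else 0) * rowSum U k
        = (if k = i then rowSum U k else 0) + (if k = h then 2 * rowSum U k else 0) := by
      intro k
      by_cases hk2 : k = i
      · subst hk2
        simp [hi]
      · by_cases hk : k = h
        · subst hk
          simp [hk2]
        · simp [hk, hk2]
    rw [Finset.sum_congr rfl fun k _ => key k, Finset.sum_add_distrib,
      Finset.sum_ite_eq' Finset.univ i (fun k => rowSum U k),
      Finset.sum_ite_eq' Finset.univ h (fun k => 2 * rowSum U k)]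
    simp

lemma NF_sum_ite_fin4 (f g : Fin 4 → ℝ) (h : Fin 4) :
    (∑ k, if k = h then f k else g k) = (∑ k, g k) + f h - g h := by
  have key : ∀ k : Fin 4, (if k = h then f k else g k)
      = g k + (if k = h then f k - g k else 0) := by
    intro k; split <;> ring
  rw [Finset.sum_congr rfl fun k _ => key k, Finset.sum_add_distrib,
    Finset.sum_ite_eq' Finset.univ h (fun k => f k - g k)]
  simp; ring

/-- The inductive invariant: the vector of row sums satisfies the pairwise
positivity, the sign condition at the head index, and the strict sum bound at
all other indices. -/
def NFGood (v : Fin 4 → ℝ) (a : Fin 4 × Bool) : Prop :=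
  (∀ i j : Fin 4, i ≠ j → 0 < v i + v j) ∧
  (a.2 = false → 0 < v a.1) ∧
  (a.2 = true → v a.1 < 0) ∧
  (∀ i : Fin 4, i ≠ a.1 → 2 * v i < ∑ k, v k)

lemma NF_sum4_pos (v : Fin 4 → ℝ) (hp : ∀ i j : Fin 4, i ≠ j → 0 < v i + v j) :
    0 < ∑ k, v k := by
  have h01 := hp 0 1 (by decide); have h23 := hp 2 3 (by decide)
  rw [Fin.sum_univ_four]; linarith

lemma NF_rest_pos (v : Fin 4 → ℝ) (hp : ∀ i j : Fin 4, i ≠ j → 0 < v i + v j)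
    (h : Fin 4) : 0 < (∑ k, v k) - v h := by
  have h01 := hp 0 1 (by decide); have h02 := hp 0 2 (by decide)
  have h03 := hp 0 3 (by decide); have h12 := hp 1 2 (by decide)
  have h13 := hp 1 3 (by decide); have h23 := hp 2 3 (by decide)
  rw [Fin.sum_univ_four]
  fin_cases h <;> simp only [NF_finmk0, NF_finmk1, NF_finmk2, NF_finmk3] <;> linarith

lemma NF_pair_aux (v : Fin 4 → ℝ) (hp : ∀ i j : Fin 4, i ≠ j → 0 < v i + v j)
    (h j : Fin 4) (hj : j ≠ h) : 0 < (∑ k, v k) - v h + v j := by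
  have h01 := hp 0 1 (by decide); have h02 := hp 0 2 (by decide)
  have h03 := hp 0 3 (by decide); have h12 := hp 1 2 (by decide)
  have h13 := hp 1 3 (by decide); have h23 := hp 2 3 (by decide)
  rw [Fin.sum_univ_four]
  fin_cases h <;> fin_cases j <;>
    simp only [NF_finmk0, NF_finmk1, NF_finmk2, NF_finmk3] at hj ⊢ <;>
    first | exact absurd rfl hj | linarith

lemma NF_key_aux3 (v : Fin 4 → ℝ) (hp : ∀ i j : Fin 4, i ≠ j → 0 < v i + v j)
    (h k : Fin 4) (hk : k ≠ h) (hkey : 2 * v h < ∑ j, v j) :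
    2 * v k + 4 * v h < 3 * ∑ j, v j := by
  have h01 := hp 0 1 (by decide); have h02 := hp 0 2 (by decide)
  have h03 := hp 0 3 (by decide); have h12 := hp 1 2 (by decide)
  have h13 := hp 1 3 (by decide); have h23 := hp 2 3 (by decide)
  rw [Fin.sum_univ_four] at hkey ⊢
  fin_cases h <;> fin_cases k <;>
    simp only [NF_finmk0, NF_finmk1, NF_finmk2, NF_finmk3] at hk hkey ⊢ <;>
    first | exact absurd rfl hk | linarith

lemma NF_step_S (v : Fin 4 → ℝ) (h : Fin 4) (b : Fin 4 × Bool)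
    (hG : NFGood v b) (hR : NormalRel (h, false) b) :
    NFGood (fun i => if i = h then 2 * (∑ k, v k) - 3 * v h else v i) (h, false) := by
  obtain ⟨hp, hbf, hbt, hlt⟩ := hG
  have hs : 0 < ∑ k, v k := NF_sum4_pos v hp
  have hkey : 2 * v h < ∑ k, v k := by
    rcases b with ⟨k, bb⟩
    cases bb
    · have hk : h ≠ k := fun e => hR.1 (by rw [e])
      exact hlt h hk
    · by_cases hk : h = k
      · have hneg := hbt rfl
        subst hk
        linarith
      · exact hlt h hk
  have hsum : (∑ k, (if k = h then 2 * (∑ j, v j) - 3 * v h else v k))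
      = 3 * (∑ k, v k) - 4 * v h := by
    rw [NF_sum_ite_fin4 (fun _ => 2 * (∑ j, v j) - 3 * v h) v h]
    ring
  refine ⟨?_, ?_, ?_, ?_⟩
  · intro i j hij
    dsimp only
    by_cases hi : i = h <;> by_cases hj : j = h
    · exact absurd (hi.trans hj.symm) hij
    · subst hi
      rw [if_pos rfl, if_neg hj]
      have h1 := NF_pair_aux v hp i j hj
      linarith
    · subst hj
      rw [if_neg hi, if_pos rfl]
      have h1 := NF_pair_aux v hp j i hi
      linarith
    · rw [if_neg hi, if_neg hj]
      exact hp i j hij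
  · intro _
    dsimp only
    rw [if_pos rfl]
    have h1 := NF_rest_pos v hp h
    linarith
  · intro hc
    exact absurd hc (by simp)
  · intro i hi
    dsimp only
    rw [hsum, if_neg hi]
    have h1 := NF_key_aux3 v hp h i hi hkey
    linarith

lemma NF_step_T (v : Fin 4 → ℝ) (h : Fin 4) (b : Fin 4 × Bool)
    (hG : NFGood v b) (hR : NormalRel (h, true) b) :
    NFGood (fun i => if i = h then -(v h) else v i + 2 * v h) (h, true) := by
  obtain ⟨hp, hbf, hbt, hlt⟩ := hG
  have hs : 0 < ∑ k, v k := NF_sum4_pos v hp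
  have hvh : 0 < v h := by
    rcases b with ⟨k, bb⟩
    cases bb
    · have hk : k = h := hR.2 rfl rfl
      subst hk
      exact hbf rfl
    · have hk : k ≠ h := fun e => hR.1 (by rw [e])
      have h1 := hbt rfl
      have h2 := hp h k (Ne.symm hk)
      linarith
  have hkey : ∀ i : Fin 4, i ≠ h → 2 * v i < ∑ k, v k := by
    intro i hi
    rcases b with ⟨k, bb⟩
    by_cases hik : i = k
    · cases bb
      · have hkh : k = h := hR.2 rfl rfl
        exact absurd (hik.trans hkh) hi
      · have h1 := hbt rfl
        rw [hik]
        linarith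
    · exact hlt i hik
  have hsum : (∑ k, (if k = h then -(v h) else v k + 2 * v h))
      = (∑ k, v k) + 4 * v h := by
    rw [NF_sum_ite_fin4 (fun _ => -(v h)) (fun k => v k + 2 * v h) h]
    have h8 : (∑ k : Fin 4, (v k + 2 * v h)) = (∑ k, v k) + 8 * v h := by
      rw [Finset.sum_add_distrib, Finset.sum_const, Finset.card_univ]
      simp [Fintype.card_fin]
      ring
    rw [h8]
    ring
  refine ⟨?_, ?_, ?_, ?_⟩
  · intro i j hij
    dsimp only
    by_cases hi : i = h <;> by_cases hj : j = h
    · exact absurd (hi.trans hj.symm) hij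
    · subst hi
      rw [if_pos rfl, if_neg hj]
      have h1 := hp i j hij
      linarith
    · subst hj
      rw [if_neg hi, if_pos rfl]
      have h1 := hp i j hij
      linarith
    · rw [if_neg hi, if_neg hj]
      have h1 := hp i j hij
      linarith
  · intro hc
    exact absurd hc (by simp)
  · intro _
    dsimp only
    rw [if_pos rfl]
    linarith
  · intro i hi
    dsimp only
    rw [hsum, if_neg hi]
    have h1 := hkey i hi
    linarith

lemma NF_rowSum_one (k : Fin 4) : rowSum (1 : Matrix (Fin 4) (Fin 4) ℝ) k = 1 := by
  simp [rowSum, Matrix.one_apply]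

lemma NF_sum_rowSum_one : (∑ k, rowSum (1 : Matrix (Fin 4) (Fin 4) ℝ) k) = 4 := by
  rw [Fin.sum_univ_four, NF_rowSum_one, NF_rowSum_one, NF_rowSum_one, NF_rowSum_one]
  norm_num

lemma NF_good_base (a : Fin 4 × Bool) : NFGood (fun i => rowSum (gen a) i) a := by
  rcases a with ⟨h, bb⟩
  cases bb
  · have hg : gen (h, false) = S h * 1 := by simp [gen]
    have hv : ∀ i, rowSum (gen (h, false)) i = if i = h then 5 else 1 := by
      intro i
      rw [hg, NF_rowSum_S_mul, NF_sum_rowSum_one]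
      simp only [NF_rowSum_one]
      split <;> norm_num
    have hsum : (∑ k, rowSum (gen (h, false)) k) = 8 := by
      rw [Finset.sum_congr rfl fun k _ => hv k,
        NF_sum_ite_fin4 (fun _ => (5:ℝ)) (fun _ => (1:ℝ)) h]
      rw [Fin.sum_univ_four]
      norm_num
    refine ⟨?_, ?_, ?_, ?_⟩
    · intro i j hij
      dsimp only
      rw [hv, hv]
      split_ifs <;> norm_num
    · intro _
      dsimp only
      rw [hv, if_pos rfl]
      norm_num
    · intro hc
      exact absurd hc (by simp)
    · intro i hi
      dsimp only
      rw [Finset.sum_congr rfl fun k _ => hv k] at hsum ⊢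
      rw [hsum, hv, if_neg hi]
      norm_num
  · have hg : gen (h, true) = (S h)ᵀ * 1 := by simp [gen]
    have hv : ∀ i, rowSum (gen (h, true)) i = if i = h then -1 else 3 := by
      intro i
      rw [hg, NF_rowSum_ST_mul]
      simp only [NF_rowSum_one]
      split <;> norm_num
    have hsum : (∑ k, rowSum (gen (h, true)) k) = 8 := by
      rw [Finset.sum_congr rfl fun k _ => hv k,
        NF_sum_ite_fin4 (fun _ => (-1:ℝ)) (fun _ => (3:ℝ)) h]
      rw [Fin.sum_univ_four]
      norm_num
    refine ⟨?_, ?_, ?_, ?_⟩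
    · intro i j hij
      dsimp only
      rw [hv, hv]
      by_cases hi : i = h <;> by_cases hj : j = h
      · exact absurd (hi.trans hj.symm) hij
      · rw [if_pos hi, if_neg hj]; norm_num
      · rw [if_neg hi, if_pos hj]; norm_num
      · rw [if_neg hi, if_neg hj]; norm_num
    · intro hc
      exact absurd hc (by simp)
    · intro _
      dsimp only
      rw [hv, if_pos rfl]
      norm_num
    · intro i hi
      dsimp only
      rw [hsum, hv, if_neg hi]
      norm_num

lemma NF_good_key (l : List (Fin 4 × Bool)) :
    ∀ a : Fin 4 × Bool, (a :: l).Chain' NormalRel →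
      NFGood (fun i => rowSum (((a :: l).map gen).prod) i) a := by
  induction l with
  | nil =>
    intro a _
    have : ((([a]).map gen).prod) = gen a := by simp
    rw [this]
    exact NF_good_base a
  | cons b t ih =>
    intro a hc
    rw [List.Chain', List.isChain_cons_cons] at hc
    obtain ⟨hab, hc⟩ := hc
    have hG := ih b hc
    have hprod : (((a :: b :: t).map gen).prod) = gen a * ((b :: t).map gen).prod := by
      simp [List.prod_cons]
    rcases a with ⟨h, bb⟩
    cases bb
    · have heq : (fun i => rowSum ((((h, false) :: b :: t).map gen).prod) i)
          = fun i => if i = h then 2 * (∑ k, rowSum (((b :: t).map gen).prod) k)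
              - 3 * rowSum (((b :: t).map gen).prod) h
            else rowSum (((b :: t).map gen).prod) i := by
        funext i
        rw [hprod]
        have hg : gen (h, false) = S h := by simp [gen]
        rw [hg, NF_rowSum_S_mul]
      rw [heq]
      exact NF_step_S _ h b hG hab
    · have heq : (fun i => rowSum ((((h, true) :: b :: t).map gen).prod) i)
          = fun i => if i = h then -(rowSum (((b :: t).map gen).prod) h)
            else rowSum (((b :: t).map gen).prod) i
              + 2 * rowSum (((b :: t).map gen).prod) h := by
        funext i
        rw [hprod]
        have hg : gen (h, true) = (S h)ᵀ := by simp [gen]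
        rw [hg, NF_rowSum_ST_mul]
      rw [heq]
      exact NF_step_T _ h b hG hab

/-- Row-sum inequalities for normal-form words `U = U_n ⋯ U_1` in the
super-Apollonian generators (written as a list with leftmost letter first):
(i) `r_i(U) + r_j(U) > 0` for `i ≠ j`;
(ii) if the leftmost letter is `S h` then `r_h(U) > 0` and
`2·r_i(U) < r_1(U) + r_2(U) + r_3(U) + r_4(U)` for all `i ≠ h`;
(iii) if the leftmost letter is `S hᵀ` then `r_h(U) < 0` and
`2·r_i(U) < r_1(U) + r_2(U) + r_3(U) + r_4(U)` for all `i ≠ h`. -/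
theorem normal_form_row_sums
    (l : List (Fin 4 × Bool)) (hne : l ≠ []) (hnf : l.Chain' NormalRel)
    (U : Matrix (Fin 4) (Fin 4) ℝ) (hU : U = (l.map gen).prod) :
    (∀ i j : Fin 4, i ≠ j → 0 < rowSum U i + rowSum U j) ∧
    (∀ h : Fin 4, l.head? = some (h, false) →
      0 < rowSum U h ∧
      ∀ i : Fin 4, i ≠ h → 2 * rowSum U i < ∑ k, rowSum U k) ∧
    (∀ h : Fin 4, l.head? = some (h, true) →
      rowSum U h < 0 ∧
      ∀ i : Fin 4, i ≠ h → 2 * rowSum U i < ∑ k, rowSum U k) := by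
  subst hU
  rcases l with _ | ⟨a, t⟩
  · exact absurd rfl hne
  obtain ⟨hp, hbf, hbt, hlt⟩ := NF_good_key t a hnf
  refine ⟨fun i j hij => hp i j hij, ?_, ?_⟩
  · intro h hh
    simp only [List.head?_cons, Option.some.injEq] at hh
    subst hh
    exact ⟨hbf rfl, fun i hi => hlt i hi⟩
  · intro h hh
    simp only [List.head?_cons, Option.some.injEq] at hh
    subst hh
    exact ⟨hbt rfl, fun i hi => hlt i hi⟩
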